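/- Vanishing order estimate from a three-ball inequality: suppose a function F : (0, R₀] → [0, ∞) is nondecreasing (F(R) = ∫_{|x|<R}|u|² dx) and satisfies, for all sufficiently small R₁ and fixed 0 < R₂ < R₃ ≤ R₀, the inequality F(R₂) ≤ C F(R₁)^τ F(R₃)^{1−τ} with τ = c/(−log R₁) for constants C, c > 0. If F(R₂) > 0, then there exist K > 0 and m > 0 such that F(R) ≥ K R^m for all sufficiently small R > 0; explicitly one may take K = F(R₃) and m = (1/c)(log C + log(F(R₃)/F(R₂))). -/
import Mathlib


open Real

/-- Vanishing order estimate from a three-ball inequality: if `F` is nondecreasing,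
`F(R₂) ≤ C F(R₁)^τ F(R₃)^{1−τ}` with `τ = c/(−log R₁)` for all small `R₁`, and
`F(R₂) > 0`, then `F(R) ≥ K R^m` for small `R`; explicitly one may take
`K = F(R₃)` and `m = (1/c)(log C + log(F(R₃)/F(R₂)))`. -/
theorem vanishing_order_estimate (R₀ R₂ R₃ C c : ℝ) (F : ℝ → ℝ)
    (hR₂ : 0 < R₂) (hR₂R₃ : R₂ < R₃) (hR₃ : R₃ ≤ R₀)
    (hC : 1 ≤ C) (hc : 0 < c)
    (hFnonneg : ∀ R, 0 < R → R ≤ R₀ → 0 ≤ F R)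
    (hFmono : ∀ s t, 0 < s → s ≤ t → t ≤ R₀ → F s ≤ F t)
    (hthree : ∃ Rstar > 0, ∀ R₁, 0 < R₁ → R₁ < Rstar →
      F R₂ ≤ C * (F R₁) ^ (c / (-Real.log R₁)) * (F R₃) ^ (1 - c / (-Real.log R₁)))
    (hpos : 0 < F R₂) :
    (∃ K > 0, ∃ m > 0, ∃ R' > 0, ∀ R, 0 < R → R < R' → K * R ^ m ≤ F R)
    ∧ (∃ R' > 0, ∀ R, 0 < R → R < R' →
        F R₃ * R ^ ((1 / c) * (Real.log C + Real.log (F R₃ / F R₂))) ≤ F R) := by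
  obtain ⟨Rstar, hRstar, hthree⟩ := hthree
  have hR₃pos : 0 < R₃ := hR₂.trans hR₂R₃
  have hF₃ : 0 < F R₃ := lt_of_lt_of_le hpos (hFmono R₂ R₃ hR₂ hR₂R₃.le hR₃)
  set m := (1 / c) * (Real.log C + Real.log (F R₃ / F R₂)) with hm
  have hF₂₃ : F R₂ ≤ F R₃ := hFmono R₂ R₃ hR₂ hR₂R₃.le hR₃
  have hm0 : 0 ≤ m := by
    apply mul_nonneg (by positivity)
    have h1 : 0 ≤ Real.log C := Real.log_nonneg hC
    have h2 : 0 ≤ Real.log (F R₃ / F R₂) := Real.log_nonneg (by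
      rw [le_div_iff₀ hpos]; simpa using hF₂₃)
    linarith
  set R' := min Rstar (min (Real.exp (-c)) R₂) with hR'
  have hR'pos : 0 < R' := lt_min hRstar (lt_min (Real.exp_pos _) hR₂)
  have key : ∀ R, 0 < R → R < R' → F R₃ * R ^ m ≤ F R := by
    intro R hRpos hRR'
    have hRst : R < Rstar := hRR'.trans_le (min_le_left _ _)
    have hRe : R < Real.exp (-c) := hRR'.trans_le ((min_le_right _ _).trans (min_le_left _ _))
    have hRR₂ : R < R₂ := hRR'.trans_le ((min_le_right _ _).trans (min_le_right _ _))
    have hRR₀ : R ≤ R₀ := le_of_lt (hRR₂.trans (hR₂R₃.trans_le hR₃))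
    have hlogR : Real.log R < -c := by
      have := Real.log_lt_log hRpos hRe
      rwa [Real.log_exp] at this
    have hLpos : 0 < -Real.log R := by linarith
    have hLc : c < -Real.log R := by linarith
    have hτpos : 0 < c / (-Real.log R) := div_pos hc hLpos
    have hτlt : c / (-Real.log R) < 1 := (div_lt_one hLpos).mpr hLc
    have hthreeR := hthree R hRpos hRst
    have hFR : 0 < F R := by
      rcases lt_or_eq_of_le (hFnonneg R hRpos hRR₀) with h | h
      · exact h
      · exfalso
        rw [← h, Real.zero_rpow (ne_of_gt hτpos)] at hthreeR
        simp at hthreeR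
        linarith
    have hlog : Real.log (F R₂) ≤ Real.log C + (c / (-Real.log R)) * Real.log (F R)
        + (1 - c / (-Real.log R)) * Real.log (F R₃) := by
      have h := Real.log_le_log hpos hthreeR
      rw [Real.log_mul (by positivity) (by positivity),
        Real.log_mul (by positivity) (by positivity),
        Real.log_rpow hFR, Real.log_rpow hF₃] at h
      linarith
    set L := -Real.log R with hLdef
    have hL0 : L ≠ 0 := ne_of_gt hLpos
    have h : L * Real.log (F R₂) ≤ L * Real.log C + c * Real.log (F R)
        + (L - c) * Real.log (F R₃) := by
      have h0 := mul_le_mul_of_nonneg_left hlog hLpos.le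
      have e1 : L * (c / L * Real.log (F R)) = c * Real.log (F R) := by
        field_simp
      have e2 : L * ((1 - c / L) * Real.log (F R₃)) = (L - c) * Real.log (F R₃) := by
        field_simp
      rw [mul_add, mul_add, e1, e2] at h0
      linarith
    have hmexp : c * m = Real.log C + Real.log (F R₃) - Real.log (F R₂) := by
      rw [hm, Real.log_div hF₃.ne' hpos.ne']; field_simp; ring
    have hmain : Real.log (F R₃) + Real.log R * m ≤ Real.log (F R) := by
      have hgoal : c * (Real.log (F R₃) + Real.log R * m) ≤ c * Real.log (F R) := by
        have hlogRL : Real.log R = -L := by rw [hLdef]; ring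
        have e3 : c * (Real.log (F R₃) + Real.log R * m)
            = c * Real.log (F R₃) + Real.log R * (c * m) := by ring
        rw [e3, hmexp, hlogRL]
        ring_nf
        ring_nf at h
        linarith
      exact le_of_mul_le_mul_left hgoal hc
    calc F R₃ * R ^ m = Real.exp (Real.log (F R₃) + Real.log R * m) := by
          rw [Real.exp_add, Real.exp_log hF₃, Real.rpow_def_of_pos hRpos]
      _ ≤ Real.exp (Real.log (F R)) := Real.exp_le_exp.mpr hmain
      _ = F R := Real.exp_log hFR
  constructor
  · refine ⟨F R₃, hF₃, ⌈m⌉₊ + 1, Nat.succ_pos _, min R' 1, lt_min hR'pos one_pos, ?_⟩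
    intro R hRpos hRlt
    have h1 : R < R' := hRlt.trans_le (min_le_left _ _)
    have h2 : R < 1 := hRlt.trans_le (min_le_right _ _)
    have hcast : R ^ (⌈m⌉₊ + 1) = R ^ (((⌈m⌉₊ + 1 : ℕ) : ℝ)) :=
      (Real.rpow_natCast R _).symm
    have hle : R ^ (((⌈m⌉₊ + 1 : ℕ) : ℝ)) ≤ R ^ m :=
      Real.rpow_le_rpow_of_exponent_ge hRpos h2.le
        (by push_cast; linarith [Nat.le_ceil m])
    calc F R₃ * R ^ (⌈m⌉₊ + 1) ≤ F R₃ * R ^ m := by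
          rw [hcast]; exact mul_le_mul_of_nonneg_left hle hF₃.le
      _ ≤ F R := key R hRpos h1
  · exact ⟨R', hR'pos, key⟩
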